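/- Any monotone, odd, symmetric Boolean function on {-1,1}^n with n odd that takes values in {-1,1} must equal the Majority function (May's theorem). -/

import Mathlib

/-- Map a Boolean bit to ±1 ∈ ℝ (true ↦ 1, false ↦ -1). -/
def toR (b : Bool) : ℝ := if b then 1 else -1

/-- Majority function Maj(x) = sgn(Σ_i x_i) on {-1,1}^n. -/
noncomputable def maj {n : ℕ} (x : Fin n → Bool) : ℝ := Real.sign (∑ i, toR (x i))

open Finset

def cnt {n : ℕ} (x : Fin n → Bool) : ℕ := (univ.filter (fun i => x i = true)).card

lemma cnt_le {n : ℕ} (x : Fin n → Bool) : cnt x ≤ n := by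
  simpa [cnt] using (card_filter_le univ (fun i => x i = true)).trans_eq (by simp)

lemma sum_toR' {n : ℕ} (x : Fin n → Bool) :
    (∑ i, (if x i then (1:ℝ) else -1)) = 2 * (cnt x : ℝ) - n := by
  have h : ∀ i, (if x i then (1:ℝ) else -1) = 2 * (if x i = true then (1:ℝ) else 0) - 1 := by
    intro i; cases x i <;> norm_num
  rw [Finset.sum_congr rfl (fun i _ => h i), Finset.sum_sub_distrib, ← Finset.mul_sum,
    Finset.sum_boole]
  simp [cnt]

lemma exists_perm {n : ℕ} (x y : Fin n → Bool) (h : cnt x = cnt y) :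
    ∃ π : Equiv.Perm (Fin n), x ∘ π = y := by
  have hc : Fintype.card {i : Fin n // y i = true} = Fintype.card {i : Fin n // x i = true} := by
    simp only [Fintype.card_subtype]
    exact h.symm
  have hc' : Fintype.card {i : Fin n // ¬ (y i = true)} = Fintype.card {i : Fin n // ¬ (x i = true)} := by
    simp only [Fintype.card_subtype_compl, hc]
  let e1 := Fintype.equivOfCardEq hc
  let e2 := Fintype.equivOfCardEq hc'
  refine ⟨((Equiv.sumCompl (fun i => y i = true)).symm.trans ((e1.sumCongr e2).trans
    (Equiv.sumCompl (fun i => x i = true)))), ?_⟩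
  funext i
  simp only [Function.comp_apply, Equiv.trans_apply, Equiv.sumCongr_apply]
  by_cases hi : y i = true
  · rw [Equiv.sumCompl_symm_apply_of_pos (p := fun j => y j = true) hi]
    simp only [Sum.map_inl, Equiv.sumCompl_apply_inl]
    rw [(e1 ⟨i, hi⟩).2, hi]
  · rw [Equiv.sumCompl_symm_apply_of_neg (p := fun j => y j = true) hi]
    simp only [Sum.map_inr, Equiv.sumCompl_apply_inr]
    have h2 := (e2 ⟨i, hi⟩).2
    simp only [Bool.not_eq_true] at h2 hi
    rw [h2, hi]

def canon (n k : ℕ) : Fin n → Bool := fun i => decide ((i : ℕ) < k)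

lemma cnt_canon {n k : ℕ} (hk : k ≤ n) : cnt (canon n k) = k := by
  have : (univ.filter (fun i : Fin n => (canon n k i) = true)) =
      (Finset.range k).attachFin (fun m hm => lt_of_lt_of_le (Finset.mem_range.mp hm) hk) := by
    ext i
    simp [canon, Finset.mem_attachFin]
  rw [cnt, this, Finset.card_attachFin, Finset.card_range]


/-- May's theorem: a monotone, odd, symmetric Boolean function
on {-1,1}^n, n odd, with values in {-1,1}, equals Majority. -/
theorem mays_theorem {n : ℕ} (hn : Odd n)
    (f : (Fin n → Bool) → ℝ) (hf : ∀ x, f x = 1 ∨ f x = -1)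
    (hmono : ∀ y z : Fin n → Bool, (∀ i, y i ≤ z i) → f y ≤ f z)
    (hodd : ∀ x : Fin n → Bool, f (fun i => !(x i)) = - f x)
    (hsym : ∀ (π : Equiv.Perm (Fin n)) (x : Fin n → Bool), f (x ∘ π) = f x) :
    ∀ x, f x = maj x := by
  obtain ⟨m, hm⟩ := hn
  -- f is constant on equal counts
  have hconst : ∀ x y : Fin n → Bool, cnt x = cnt y → f x = f y := by
    intro x y h
    obtain ⟨π, hπ⟩ := exists_perm x y h
    rw [← hπ, hsym]
  have gmono : ∀ {a b : ℕ}, a ≤ b → f (canon n a) ≤ f (canon n b) := by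
    intro a b hab
    apply hmono
    intro i
    simp only [canon]
    by_cases h : (i:ℕ) < a
    · simp [h, lt_of_lt_of_le h hab]
    · simp [h]
  have gcompl : ∀ k, k ≤ n → f (canon n (n - k)) = - f (canon n k) := by
    intro k hk
    have h1 : cnt (canon n (n-k)) = cnt (fun i => !(canon n k i)) := by
      rw [cnt_canon (Nat.sub_le n k)]
      have : (univ.filter (fun i : Fin n => (!(canon n k i)) = true)) =
          (univ.filter (fun i : Fin n => canon n k i = true))ᶜ := by
        ext i; simp
      rw [cnt, this, Finset.card_compl]
      have := cnt_canon (n := n) hk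
      rw [cnt] at this
      rw [this, Fintype.card_fin]
    rw [hconst _ _ h1, hodd]
  have hmn : m < n := by omega
  have hm1n : m + 1 ≤ n := by omega
  have key : f (canon n m) = -1 ∧ f (canon n (m+1)) = 1 := by
    have h1 : f (canon n (m+1)) = - f (canon n m) := by
      have := gcompl m (le_of_lt hmn)
      rwa [show n - m = m + 1 by omega] at this
    have h2 := gmono (Nat.le_succ m)
    rcases hf (canon n m) with h | h
    · exfalso; rw [h] at h1 h2; rw [h1] at h2; linarith
    · constructor
      · exact h
      · rw [h1, h]; ring
  intro x
  have hx : f x = f (canon n (cnt x)) := hconst _ _ (cnt_canon (cnt_le x)).symm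
  have hsum : ∑ i, toR (x i) = 2 * (cnt x : ℝ) - n := by
    simpa [toR] using sum_toR' x
  rw [maj, hsum, hx]
  by_cases hk : cnt x ≤ m
  · have : 2 * (cnt x : ℝ) - n < 0 := by
      have : (cnt x : ℝ) ≤ m := by exact_mod_cast hk
      have hn' : (n : ℝ) = 2*m+1 := by exact_mod_cast hm
      linarith
    rw [Real.sign_of_neg this]
    have h1 := gmono hk
    rcases hf (canon n (cnt x)) with h | h
    · exfalso; rw [h, key.1] at h1; linarith
    · exact h
  · have hk' : m + 1 ≤ cnt x := by omega
    have : 0 < 2 * (cnt x : ℝ) - n := by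
      have : (m:ℝ) + 1 ≤ (cnt x : ℝ) := by exact_mod_cast hk'
      have hn' : (n : ℝ) = 2*m+1 := by exact_mod_cast hm
      linarith
    rw [Real.sign_of_pos this]
    have h1 := gmono hk'
    rcases hf (canon n (cnt x)) with h | h
    · exact h
    · exfalso; rw [h, key.2] at h1; linarith
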